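/- Let q ≥ 2, t ≥ 1 be integers, k = q^t, r' = t+1, and n = k + r' + 1, and suppose n(q−1) is even. Then for every q-ary sequence x of length k there exist an index z with 0 ≤ z ≤ kq−1 and a symbol u ∈ {0,1,…,q−1} such that the concatenated sequence c = [u | E(d(z)) | x ⊕_q b(z)] of length n is balanced, i.e. u + w(E(d(z))) + w(x ⊕_q b(z)) = n(q−1)/2, where d(z) is the r'-digit base-q representation of z (most significant digit first) and E is the (r',q)-Gray encoding. -/

import Mathlib

/-- Weight of a q-ary sequence: sum of its symbols. -/
def wt {k : ℕ} (x : Fin k → ℕ) : ℕ := ∑ i, x i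

/-- Weighting sequence b(s,p): b_i = (s+1) mod q if i-1 < p, else s
    (indices here are 0-based, so the condition is i < p). -/
def bvec (q k s p : ℕ) : Fin k → ℕ := fun i => if (i : ℕ) < p then (s + 1) % q else s

/-- The z-th weighting sequence b(z) = b(s,p) where z = s·k + p, 0 ≤ p ≤ k-1. -/
def bz (q k z : ℕ) : Fin k → ℕ := bvec q k (z / k) (z % k)

/-- Symbol-wise addition modulo q. -/
def addq (q : ℕ) {k : ℕ} (x y : Fin k → ℕ) : Fin k → ℕ := fun i => (x i + y i) % q

/-- (r',q)-Gray encoding, with accumulator S = sum of already-produced Gray symbols: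
    g_i = d_i if S is even, g_i = q-1-d_i if S is odd.  E(d) = grayEnc q 0 d. -/
def grayEnc (q : ℕ) : ℕ → List ℕ → List ℕ
  | _, [] => []
  | S, d :: ds =>
      let g := if S % 2 = 0 then d else q - 1 - d
      g :: grayEnc q (S + g) ds

/-- The r-digit base-q representation of z, most significant digit first. -/
def digitsBE (q r z : ℕ) : List ℕ := (List.range r).map fun i => z / q ^ (r - 1 - i) % q

lemma sum_range_mul (a b : ℕ) (f : ℕ → ℕ) :
    ∑ z ∈ Finset.range (a * b), f z
      = ∑ i ∈ Finset.range a, ∑ j ∈ Finset.range b, f (i * b + j) := by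
  induction a with
  | zero => simp
  | succ a ih =>
      rw [Finset.sum_range_succ, ← ih, Nat.succ_mul, Finset.sum_range_add]

lemma grayEnc_cons (q S d : ℕ) (ds : List ℕ) :
    grayEnc q S (d :: ds)
      = (if S % 2 = 0 then d else q - 1 - d)
        :: grayEnc q (S + (if S % 2 = 0 then d else q - 1 - d)) ds := rfl

lemma grayEnc_parity (q S : ℕ) (ds : List ℕ) : grayEnc q S ds = grayEnc q (S % 2) ds := by
  induction ds generalizing S with
  | nil => rfl
  | cons d ds ih =>
      rw [grayEnc_cons, grayEnc_cons]
      have h2 : S % 2 % 2 = S % 2 := by omega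
      rw [h2]
      congr 1
      rw [ih, ih (S % 2 + _)]
      congr 1
      omega

lemma mod_pow_div_mod (q z j r : ℕ) (hq : 0 < q) (h : j < r) :
    z % q ^ r / q ^ j % q = z / q ^ j % q := by
  have hqj : 0 < q ^ j := pow_pos hq _
  have hpow : q * q ^ (r - j - 1) = q ^ (r - j) := by
    rw [mul_comm, ← pow_succ]; congr 1; omega
  have hpow2 : q ^ j * q ^ (r - j) = q ^ r := by rw [← pow_add]; congr 1; omega
  have hz : q ^ j * (q * (q ^ (r - j - 1) * (z / q ^ r))) + z % q ^ r = z := by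
    have h2 : q ^ j * (q * (q ^ (r - j - 1) * (z / q ^ r))) = q ^ r * (z / q ^ r) := by
      rw [← hpow2, ← hpow]; ring
    rw [h2, Nat.div_add_mod]
  conv_rhs => rw [← hz]
  rw [Nat.mul_add_div hqj, Nat.mul_add_mod]

lemma digitsBE_succ (q r z : ℕ) (hq : 0 < q) :
    digitsBE q (r+1) z = (z / q ^ r % q) :: digitsBE q r (z % q ^ r) := by
  simp only [digitsBE, List.range_succ_eq_map, List.map_cons, List.map_map]
  refine List.cons_eq_cons.mpr ⟨by rw [show r + 1 - 1 - 0 = r from by omega], ?_⟩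
  apply List.map_congr_left
  intro i hi
  have hi' : i < r := List.mem_range.mp hi
  simp only [Function.comp_apply]
  rw [show r + 1 - 1 - (i + 1) = r - 1 - i from by omega]
  exact (mod_pow_div_mod q z (r-1-i) r hq (by omega)).symm

lemma digitsBE_zero (q r : ℕ) : digitsBE q r 0 = List.replicate r 0 := by
  simp only [digitsBE, Nat.zero_div, Nat.zero_mod]
  simp [List.map_const', List.eq_replicate_iff]

lemma pred_pow_div (q j r : ℕ) (hq : 2 ≤ q) (h : j < r) :
    (q ^ r - 1) / q ^ j = q ^ (r - j) - 1 := by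
  have h1 : 0 < q ^ j := pow_pos (by omega) _
  have h2 : 0 < q ^ (r - j) := pow_pos (by omega) _
  have h3 : 0 < q ^ r := pow_pos (by omega) _
  have hpow2 : q ^ (r - j) * q ^ j = q ^ r := by rw [← pow_add]; congr 1; omega
  apply Nat.div_eq_of_lt_le
  · calc (q ^ (r-j) - 1) * q ^ j = q ^ (r-j) * q ^ j - 1 * q ^ j := tsub_mul _ _ _
      _ = q ^ r - q ^ j := by rw [hpow2, one_mul]
      _ ≤ q ^ r - 1 := Nat.sub_le_sub_left h1 _
  · have hs : q ^ (r - j) - 1 + 1 = q ^ (r - j) := by omega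
    rw [hs, hpow2]
    omega

lemma pred_pow_mod (q m : ℕ) (hq : 2 ≤ q) (hm : 0 < m) : (q * m - 1) % q = q - 1 := by
  have h1 : q * m - 1 = q * (m - 1) + (q - 1) := by
    cases m with
    | zero => omega
    | succ m => simp only [Nat.mul_succ, Nat.add_sub_cancel]; omega
  rw [h1, Nat.mul_add_mod, Nat.mod_eq_of_lt (by omega)]

lemma digitsBE_pred_pow (q r : ℕ) (hq : 2 ≤ q) :
    digitsBE q r (q ^ r - 1) = List.replicate r (q - 1) := by
  simp only [digitsBE]
  rw [List.eq_replicate_iff]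
  refine ⟨by simp, ?_⟩
  intro b hb
  simp only [List.mem_map, List.mem_range] at hb
  obtain ⟨i, hi, rfl⟩ := hb
  rw [pred_pow_div q (r-1-i) r hq (by omega)]
  have h2 : q ^ (r - (r-1-i)) = q * q ^ (r - (r-1-i) - 1) := by
    rw [← pow_succ']; congr 1; omega
  rw [h2, pred_pow_mod q _ hq (pow_pos (by omega) _)]

lemma gray_replicate (q : ℕ) (hq : 1 ≤ q) (n : ℕ) : ∀ P,
    grayEnc q P (List.replicate n (q-1)) = grayEnc q (P+1) (List.replicate n 0) := by
  induction n with
  | zero => intro P; rfl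
  | succ n ih =>
      intro P
      rw [List.replicate_succ, List.replicate_succ, grayEnc_cons, grayEnc_cons]
      rcases Nat.mod_two_eq_zero_or_one P with h | h
      · have h1 : ¬ (P+1) % 2 = 0 := by omega
        rw [if_pos h, if_neg h1]
        simp only [Nat.sub_zero]
        rw [ih (P + (q-1))]
        congr 2
        omega
      · have h1 : (P+1) % 2 = 0 := by omega
        have h0 : ¬ P % 2 = 0 := by omega
        rw [if_neg h0, if_pos h1, Nat.sub_self, Nat.add_zero, Nat.add_zero, ih P]

lemma gray_step (q : ℕ) (hq : 2 ≤ q) : ∀ r P z, z + 1 < q ^ r →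
    (grayEnc q P (digitsBE q r (z+1))).sum = (grayEnc q P (digitsBE q r z)).sum + 1 ∨
    (grayEnc q P (digitsBE q r (z+1))).sum + 1 = (grayEnc q P (digitsBE q r z)).sum := by
  intro r
  induction r with
  | zero => intro P z h; simp at h
  | succ r ih =>
      intro P z h
      have hq0 : 0 < q := by omega
      have hQ : 0 < q ^ r := pow_pos hq0 _
      have hps : q ^ (r+1) = q ^ r * q := pow_succ q r
      obtain ⟨a, m, hmlt, rfl⟩ : ∃ a m, m < q ^ r ∧ z = q ^ r * a + m :=
        ⟨z / q ^ r, z % q ^ r, Nat.mod_lt _ hQ, (Nat.div_add_mod z _).symm⟩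
      have ha : a < q := by
        have h1 : q ^ r * a < q ^ r * q := by omega
        exact lt_of_mul_lt_mul_left h1 (Nat.zero_le _)
      have ediv : (q ^ r * a + m) / q ^ r = a := by
        rw [Nat.mul_add_div hQ, Nat.div_eq_of_lt hmlt, Nat.add_zero]
      have emod : (q ^ r * a + m) % q ^ r = m := by
        rw [Nat.mul_add_mod, Nat.mod_eq_of_lt hmlt]
      rw [digitsBE_succ q r _ hq0, digitsBE_succ q r _ hq0, ediv, emod]
      by_cases hm : m + 1 < q ^ r
      · have ediv1 : (q ^ r * a + m + 1) / q ^ r = a := by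
          rw [add_assoc, Nat.mul_add_div hQ, Nat.div_eq_of_lt hm, Nat.add_zero]
        have emod1 : (q ^ r * a + m + 1) % q ^ r = m + 1 := by
          rw [add_assoc, Nat.mul_add_mod, Nat.mod_eq_of_lt hm]
        rw [ediv1, emod1, grayEnc_cons, grayEnc_cons, List.sum_cons, List.sum_cons]
        rcases ih (P + (if P % 2 = 0 then a % q else q - 1 - a % q)) m hm with h' | h'
        · left; omega
        · right; omega
      · have hm' : m = q ^ r - 1 := by omega
        have e : q ^ r * a + m + 1 = q ^ r * (a + 1) := by
          rw [Nat.mul_succ, add_assoc]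
          congr 1
          omega
        have ediv1 : (q ^ r * a + m + 1) / q ^ r = a + 1 := by
          rw [e, Nat.mul_div_cancel_left _ hQ]
        have emod1 : (q ^ r * a + m + 1) % q ^ r = 0 := by
          rw [e, Nat.mul_mod_right]
        have ha1 : a + 1 < q := by
          have h1 : q ^ r * (a + 1) < q ^ r * q := by omega
          exact lt_of_mul_lt_mul_left h1 (Nat.zero_le _)
        have ea : a % q = a := Nat.mod_eq_of_lt (by omega)
        have ea1 : (a + 1) % q = a + 1 := Nat.mod_eq_of_lt ha1
        rw [ediv1, emod1, hm', ea1, ea, digitsBE_zero, digitsBE_pred_pow q r hq,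
            grayEnc_cons, grayEnc_cons, List.sum_cons, List.sum_cons,
            gray_replicate q (by omega) r]
        rcases Nat.mod_two_eq_zero_or_one P with hP | hP
        · rw [if_pos hP, if_pos hP]
          have htail : grayEnc q (P + (a+1)) (List.replicate r 0)
              = grayEnc q (P + a + 1) (List.replicate r 0) := by
            rw [← Nat.add_assoc]
          rw [htail]
          left; omega
        · have hP0 : ¬ P % 2 = 0 := by omega
          rw [if_neg hP0, if_neg hP0]
          have htail : grayEnc q (P + (q - 1 - a) + 1) (List.replicate r 0)
              = grayEnc q (P + (q - 1 - (a+1))) (List.replicate r 0) := by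
            rw [grayEnc_parity, grayEnc_parity q (P + (q - 1 - (a+1)))]
            congr 1
            omega
          rw [htail]
          right
          omega

lemma gray_sum (q : ℕ) (hq : 2 ≤ q) : ∀ r P,
    2 * ∑ z ∈ Finset.range (q ^ r), (grayEnc q P (digitsBE q r z)).sum
      = q ^ r * (r * (q - 1)) := by
  intro r
  induction r with
  | zero => intro P; simp [digitsBE, grayEnc]
  | succ r ih =>
      intro P
      have hq0 : 0 < q := by omega
      have hQ : 0 < q ^ r := pow_pos hq0 _
      have hrw : ∑ z ∈ Finset.range (q ^ (r+1)), (grayEnc q P (digitsBE q (r+1) z)).sum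
          = ∑ i ∈ Finset.range q, ∑ j ∈ Finset.range (q ^ r),
              ((if P % 2 = 0 then i else q - 1 - i)
                + (grayEnc q (P + (if P % 2 = 0 then i else q - 1 - i))
                    (digitsBE q r j)).sum) := by
        rw [pow_succ', sum_range_mul]
        apply Finset.sum_congr rfl
        intro i hi
        apply Finset.sum_congr rfl
        intro j hj
        have hi' : i < q := Finset.mem_range.mp hi
        have hj' : j < q ^ r := Finset.mem_range.mp hj
        have ediv : (i * q ^ r + j) / q ^ r = i := by
          rw [add_comm, mul_comm, Nat.add_mul_div_left _ _ hQ,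
              Nat.div_eq_of_lt hj', Nat.zero_add]
        have emod : (i * q ^ r + j) % q ^ r = j := by
          rw [add_comm, mul_comm, Nat.add_mul_mod_self_left, Nat.mod_eq_of_lt hj']
        rw [digitsBE_succ q r _ hq0, ediv, emod, Nat.mod_eq_of_lt hi',
            grayEnc_cons, List.sum_cons]
      have hgsum : 2 * ∑ i ∈ Finset.range q, (if P % 2 = 0 then i else q - 1 - i)
          = q * (q - 1) := by
        have hgauss := Finset.sum_range_id_mul_two q
        rcases Nat.mod_two_eq_zero_or_one P with hP | hP
        · simp only [if_pos hP]
          omega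
        · have hP0 : ¬ P % 2 = 0 := by omega
          simp only [if_neg hP0]
          have hrefl := Finset.sum_range_reflect (fun j => j) q
          rw [hrefl]
          omega
      rw [hrw, Finset.mul_sum]
      calc ∑ i ∈ Finset.range q, 2 * ∑ j ∈ Finset.range (q ^ r),
              ((if P % 2 = 0 then i else q - 1 - i)
                + (grayEnc q (P + (if P % 2 = 0 then i else q - 1 - i))
                    (digitsBE q r j)).sum)
          = ∑ i ∈ Finset.range q,
              (2 * (q ^ r * (if P % 2 = 0 then i else q - 1 - i)) + q ^ r * (r * (q-1))) := by
            apply Finset.sum_congr rfl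
            intro i _
            rw [Finset.sum_add_distrib, Finset.sum_const, Finset.card_range,
                smul_eq_mul, Nat.mul_add, ih (P + (if P % 2 = 0 then i else q - 1 - i))]
        _ = 2 * q ^ r * (∑ i ∈ Finset.range q, (if P % 2 = 0 then i else q - 1 - i))
              + q * (q ^ r * (r * (q-1))) := by
            rw [Finset.sum_add_distrib, Finset.sum_const, Finset.card_range,
                smul_eq_mul, ← Finset.mul_sum, ← Finset.mul_sum]
            ring_nf
        _ = q ^ r * (2 * ∑ i ∈ Finset.range q, (if P % 2 = 0 then i else q - 1 - i))
              + q * (q ^ r * (r * (q-1))) := by ring_nf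
        _ = q ^ r * (q * (q-1)) + q * (q ^ r * (r * (q-1))) := by rw [hgsum]
        _ = q ^ (r+1) * ((r+1) * (q-1)) := by rw [pow_succ']; ring

lemma add_mod_mod' (q a b : ℕ) : (a + b % q) % q = (a + b) % q := by
  rw [Nat.add_mod, Nat.mod_mod_of_dvd b dvd_rfl, ← Nat.add_mod]

lemma shift_sum (q c : ℕ) (hq : 0 < q) :
    ∑ s ∈ Finset.range q, (c + s) % q = ∑ s ∈ Finset.range q, s := by
  have hdm := Nat.div_add_mod c q
  have hcm : c % q < q := Nat.mod_lt _ hq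
  apply Finset.sum_nbij' (i := fun s => (c + s) % q) (j := fun s => (q - c % q + s) % q)
  · intro a ha
    exact Finset.mem_range.mpr (Nat.mod_lt _ hq)
  · intro a ha
    exact Finset.mem_range.mpr (Nat.mod_lt _ hq)
  · intro a ha
    have ha' : a < q := Finset.mem_range.mp ha
    rw [add_mod_mod', show q - c % q + (c + a) = q * (c / q + 1) + a by
      rw [Nat.mul_succ]; omega, Nat.mul_add_mod, Nat.mod_eq_of_lt ha']
  · intro a ha
    have ha' : a < q := Finset.mem_range.mp ha
    rw [add_mod_mod', show c + (q - c % q + a) = q * (c / q + 1) + a by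
      rw [Nat.mul_succ]; omega, Nat.mul_add_mod, Nat.mod_eq_of_lt ha']
  · intro a ha
    rfl

lemma ite_sum_range (k i A B : ℕ) (hik : i < k) :
    ∑ p ∈ Finset.range k, (if i < p then A else B) = (k - (i+1)) * A + (i+1) * B := by
  rw [Finset.range_eq_Ico, ← Finset.sum_Ico_consecutive _ (Nat.zero_le (i+1)) (by omega)]
  have e1 : ∑ p ∈ Finset.Ico 0 (i+1), (if i < p then A else B) = (i+1) * B := by
    rw [Finset.sum_congr rfl (fun p hp => if_neg (by
      rw [Finset.mem_Ico] at hp; omega)), Finset.sum_const, Nat.card_Ico, smul_eq_mul,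
      Nat.sub_zero]
  have e2 : ∑ p ∈ Finset.Ico (i+1) k, (if i < p then A else B) = (k - (i+1)) * A := by
    rw [Finset.sum_congr rfl (fun p hp => if_pos (by
      rw [Finset.mem_Ico] at hp; omega)), Finset.sum_const, Nat.card_Ico, smul_eq_mul]
  rw [e1, e2]
  omega

lemma bz_eval (q k s p : ℕ) (hk : 0 < k) (hp : p < k) (i : Fin k) :
    bz q k (s * k + p) i = if (i : ℕ) < p then (s + 1) % q else s := by
  have ediv : (s * k + p) / k = s := by
    rw [add_comm, mul_comm, Nat.add_mul_div_left _ _ hk, Nat.div_eq_of_lt hp, Nat.zero_add]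
  have emod : (s * k + p) % k = p := by
    rw [add_comm, mul_comm, Nat.add_mul_mod_self_left, Nat.mod_eq_of_lt hp]
  rw [bz, ediv, emod]
  rfl

lemma Wz_sum_i (q k : ℕ) (hq : 2 ≤ q) (hk : 0 < k) (c : ℕ) (i : Fin k) :
    ∑ z ∈ Finset.range (k * q), (c + bz q k z i) % q
      = k * ∑ v ∈ Finset.range q, v := by
  have hq0 : 0 < q := by omega
  rw [mul_comm k q, sum_range_mul]
  have hinner : ∀ s ∈ Finset.range q, ∑ p ∈ Finset.range k, (c + bz q k (s * k + p) i) % q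
      = (k - ((i:ℕ)+1)) * ((c + 1 + s) % q) + ((i:ℕ)+1) * ((c + s) % q) := by
    intro s hs
    have h1 : ∀ p ∈ Finset.range k, (c + bz q k (s * k + p) i) % q
        = (if (i:ℕ) < p then (c + 1 + s) % q else (c + s) % q) := by
      intro p hp
      rw [bz_eval q k s p hk (Finset.mem_range.mp hp) i]
      by_cases hip : (i : ℕ) < p
      · rw [if_pos hip, if_pos hip, add_mod_mod']
        congr 1
        omega
      · rw [if_neg hip, if_neg hip]
    rw [Finset.sum_congr rfl h1, ite_sum_range k i _ _ i.isLt]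
  rw [Finset.sum_congr rfl hinner, Finset.sum_add_distrib, ← Finset.mul_sum, ← Finset.mul_sum]
  have hs1 : ∑ s ∈ Finset.range q, (c + 1 + s) % q = ∑ v ∈ Finset.range q, v :=
    shift_sum q (c+1) hq0
  have hs2 : ∑ s ∈ Finset.range q, (c + s) % q = ∑ v ∈ Finset.range q, v :=
    shift_sum q c hq0
  rw [hs1, hs2, ← Nat.add_mul]
  congr 1
  have := i.isLt
  omega

lemma W_sum (q k : ℕ) (hq : 2 ≤ q) (hk : 0 < k) (x : Fin k → ℕ) :
    2 * ∑ z ∈ Finset.range (k * q), (∑ i : Fin k, (x i + bz q k z i) % q)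
      = k * k * (q * (q - 1)) := by
  rw [Finset.sum_comm]
  have h1 : ∀ i ∈ (Finset.univ : Finset (Fin k)),
      ∑ z ∈ Finset.range (k * q), (x i + bz q k z i) % q
        = k * ∑ v ∈ Finset.range q, v := by
    intro i _
    exact Wz_sum_i q k hq hk (x i) i
  rw [Finset.sum_congr rfl h1, Finset.sum_const, Finset.card_univ, Fintype.card_fin,
      smul_eq_mul]
  have hgauss := Finset.sum_range_id_mul_two q
  have : 2 * (k * (k * ∑ v ∈ Finset.range q, v)) = k * k * ((∑ v ∈ Finset.range q, v) * 2) := by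
    ring
  rw [this, hgauss]

lemma W_step (q k : ℕ) (hq : 2 ≤ q) (hk : 0 < k) (x : Fin k → ℕ)
    (z : ℕ) (hz : z + 1 < k * q) :
    (∑ i : Fin k, (x i + bz q k (z+1) i) % q) = (∑ i : Fin k, (x i + bz q k z i) % q) + 1 ∨
    (∑ i : Fin k, (x i + bz q k (z+1) i) % q) + (q-1) = (∑ i : Fin k, (x i + bz q k z i) % q) := by
  have hq0 : 0 < q := by omega
  obtain ⟨s, p, hp, rfl⟩ : ∃ s p, p < k ∧ z = s * k + p :=
    ⟨z / k, z % k, Nat.mod_lt _ hk, by rw [mul_comm]; exact (Nat.div_add_mod z _).symm⟩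
  have hkey : ∃ j : Fin k, (∀ i : Fin k, i ≠ j → bz q k (s*k+p+1) i = bz q k (s*k+p) i) ∧
      (x j + bz q k (s*k+p+1) j) % q = (x j + bz q k (s*k+p) j + 1) % q := by
    by_cases hpk : p + 1 < k
    · refine ⟨⟨p, hp⟩, ?_, ?_⟩
      · intro i hij
        have hij' : (i : ℕ) ≠ p := fun hc => hij (Fin.ext hc)
        rw [show s*k+p+1 = s*k+(p+1) by omega, bz_eval q k s (p+1) hk hpk,
            bz_eval q k s p hk hp]
        by_cases hip : (i : ℕ) < p
        · rw [if_pos hip, if_pos (by omega)]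
        · rw [if_neg hip, if_neg (by omega)]
      · rw [show s*k+p+1 = s*k+(p+1) by omega, bz_eval q k s (p+1) hk hpk,
            bz_eval q k s p hk hp]
        rw [if_pos (show (((⟨p, hp⟩ : Fin k) : ℕ)) < p + 1 from by exact Nat.lt_succ_self p),
            if_neg (show ¬ (((⟨p, hp⟩ : Fin k) : ℕ)) < p from by exact lt_irrefl p),
            add_mod_mod', ← Nat.add_assoc]
    · -- p = k - 1, carry
      have hpk' : p = k - 1 := by omega
      have hs1 : s + 1 < q := by
        by_contra hcon
        have h1 : q * k ≤ (s+1) * k := Nat.mul_le_mul_right _ (by omega)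
        have h2 : (s+1) * k = s * k + k := by rw [Nat.succ_mul]
        have h3 : q * k = k * q := Nat.mul_comm q k
        omega
      have e : s*k+p+1 = (s+1) * k + 0 := by
        rw [Nat.succ_mul]
        omega
      refine ⟨⟨p, hp⟩, ?_, ?_⟩
      · intro i hij
        have hij' : (i : ℕ) ≠ p := fun hc => hij (Fin.ext hc)
        rw [e, bz_eval q k (s+1) 0 hk hk, bz_eval q k s p hk hp]
        rw [if_neg (Nat.not_lt_zero _), if_pos (by have := i.isLt; omega),
            Nat.mod_eq_of_lt hs1]
      · rw [e, bz_eval q k (s+1) 0 hk hk, bz_eval q k s p hk hp]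
        rw [if_neg (Nat.not_lt_zero _),
            if_neg (show ¬ (((⟨p, hp⟩ : Fin k) : ℕ)) < p from by exact lt_irrefl p),
            ← Nat.add_assoc]
  obtain ⟨j, hne, hj⟩ := hkey
  have hsum : ∀ (b : Fin k → ℕ), ∑ i : Fin k, (x i + b i) % q
      = (x j + b j) % q + ∑ i ∈ Finset.univ.erase j, (x i + b i) % q :=
    fun b => (Finset.add_sum_erase _ _ (Finset.mem_univ j)).symm
  rw [hsum (bz q k (s*k+p+1)), hsum (bz q k (s*k+p))]
  have herase : ∑ i ∈ Finset.univ.erase j, (x i + bz q k (s*k+p+1) i) % q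
      = ∑ i ∈ Finset.univ.erase j, (x i + bz q k (s*k+p) i) % q := by
    apply Finset.sum_congr rfl
    intro i hi
    rw [hne i (Finset.ne_of_mem_erase hi)]
  rw [herase]
  set y := x j + bz q k (s*k+p) j with hy
  have hymod : y % q < q := Nat.mod_lt _ hq0
  have hkey2 : (y + 1) % q = (y % q + 1) % q := by
    rw [Nat.add_mod, Nat.mod_eq_of_lt (show 1 < q by omega)]
  by_cases hc : y % q + 1 < q
  · left
    rw [hj, hkey2, Nat.mod_eq_of_lt hc]
    omega
  · right
    have : y % q = q - 1 := by omega
    rw [hj, hkey2, this, show q - 1 + 1 = q by omega, Nat.mod_self]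
    omega

lemma ivt_up (f : ℕ → ℕ) (A B d a : ℕ) (hd : A + d ≤ B + 1) : ∀ n : ℕ,
    (∀ z, a ≤ z → z < a + n → f (z+1) ≤ f z + d) →
    f a < A → A ≤ f (a + n) →
    ∃ z, a ≤ z ∧ z ≤ a + n ∧ A ≤ f z ∧ f z ≤ B := by
  intro n
  induction n with
  | zero =>
      intro _ h1 h2
      exfalso
      rw [Nat.add_zero] at h2
      omega
  | succ n ih =>
      intro hstep h1 h2
      by_cases hc : A ≤ f (a + n)
      · obtain ⟨z, hz1, hz2, hz3, hz4⟩ := ih (fun z hza hzb => hstep z hza (by omega)) h1 hc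
        exact ⟨z, hz1, by omega, hz3, hz4⟩
      · refine ⟨a + n + 1, by omega, by omega, ?_, ?_⟩
        · rw [show a + n + 1 = a + (n+1) by omega]; exact h2
        · have hs := hstep (a + n) (by omega) (by omega)
          have h2' : A ≤ f (a + n + 1) := by
            rw [show a + n + 1 = a + (n+1) by omega]; exact h2
          omega

lemma ivt_down (f : ℕ → ℕ) (A B d a : ℕ) (hd : A + d ≤ B + 1) : ∀ n : ℕ,
    (∀ z, a ≤ z → z < a + n → f z ≤ f (z+1) + d) →
    B < f a → f (a + n) ≤ B →
    ∃ z, a ≤ z ∧ z ≤ a + n ∧ A ≤ f z ∧ f z ≤ B := by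
  intro n
  induction n with
  | zero =>
      intro _ h1 h2
      exfalso
      rw [Nat.add_zero] at h2
      omega
  | succ n ih =>
      intro hstep h1 h2
      by_cases hc : f (a + n) ≤ B
      · obtain ⟨z, hz1, hz2, hz3, hz4⟩ := ih (fun z hza hzb => hstep z hza (by omega)) h1 hc
        exact ⟨z, hz1, by omega, hz3, hz4⟩
      · refine ⟨a + n + 1, by omega, by omega, ?_, ?_⟩
        · have hs := hstep (a + n) (by omega) (by omega)
          have h2' : f (a + n + 1) ≤ B := by
            rw [show a + n + 1 = a + (n+1) by omega]; exact h2
          omega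
        · rw [show a + n + 1 = a + (n+1) by omega]; exact h2

/-- with k = q^t, r' = t+1, n = k+r'+1 and n(q-1) even, every q-ary
    sequence x of length k can be encoded as a balanced sequence
    c = [u | E(d(z)) | x ⊕_q b(z)] of length n, i.e. with
    u + w(E(d(z))) + w(x ⊕_q b(z)) = n(q-1)/2. -/
theorem stmt15 (q t k r' n : ℕ) (hq : 2 ≤ q) (ht : 1 ≤ t)
    (hk : k = q ^ t) (hr' : r' = t + 1) (hn : n = k + r' + 1)
    (heven : Even (n * (q - 1)))
    (x : Fin k → ℕ) (hx : ∀ i, x i < q) :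
    ∃ z : ℕ, z ≤ k * q - 1 ∧ ∃ u : ℕ, u < q ∧
      2 * (u + (grayEnc q 0 (digitsBE q r' z)).sum + wt (addq q x (bz q k z)))
        = n * (q - 1) := by
  have hq0 : 0 < q := by omega
  have hk0 : 0 < k := by rw [hk]; exact pow_pos hq0 _
  have hkq : k * q = q ^ r' := by rw [hk, hr', pow_succ]
  have hkge : q ≤ k := by rw [hk]; exact Nat.le_self_pow (by omega) q
  set N := k * q with hN
  have hN0 : 0 < N := Nat.mul_pos hk0 hq0
  set G : ℕ → ℕ := fun z => (grayEnc q 0 (digitsBE q r' z)).sum with hG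
  set W : ℕ → ℕ := fun z => ∑ i : Fin k, (x i + bz q k z i) % q with hW
  set h : ℕ → ℕ := fun z => G z + W z with hh
  have hGsum : 2 * ∑ z ∈ Finset.range N, G z = N * (r' * (q-1)) := by
    rw [hkq]; exact gray_sum q hq r' 0
  have hWsum : 2 * ∑ z ∈ Finset.range N, W z = k * k * (q * (q-1)) := by
    rw [hN]; exact W_sum q k hq hk0 x
  have hhsum : ∑ z ∈ Finset.range N, (2 * h z)
      = ∑ z ∈ Finset.range N, (k * (q-1) + r' * (q-1)) := by
    have e1 : ∑ z ∈ Finset.range N, (2 * h z)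
        = 2 * ∑ z ∈ Finset.range N, G z + 2 * ∑ z ∈ Finset.range N, W z := by
      rw [Finset.mul_sum, Finset.mul_sum, ← Finset.sum_add_distrib]
      apply Finset.sum_congr rfl
      intro z _
      simp only [hh]
      ring
    rw [e1, hGsum, hWsum, Finset.sum_const, Finset.card_range, smul_eq_mul, hN]
    ring
  obtain ⟨T, hT⟩ := heven
  have hTC : 2 * T = k * (q-1) + r' * (q-1) + (q-1) := by
    have e2 : n * (q-1) = k * (q-1) + r' * (q-1) + (q-1) := by rw [hn]; ring
    omega
  have h2k : 2 * (q-1) ≤ k * (q-1) := Nat.mul_le_mul_right _ (by omega)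
  have h2r : 2 * (q-1) ≤ r' * (q-1) := Nat.mul_le_mul_right _ (by omega)
  have hq1T : q - 1 ≤ T := by omega
  have hnonempty : (Finset.range N).Nonempty := ⟨0, Finset.mem_range.mpr hN0⟩
  obtain ⟨z1, hz1m, hz1⟩ := Finset.exists_le_of_sum_le hnonempty (le_of_eq hhsum)
  obtain ⟨z2, hz2m, hz2⟩ := Finset.exists_le_of_sum_le hnonempty (le_of_eq hhsum.symm)
  have hz1N : z1 < N := Finset.mem_range.mp hz1m
  have hz2N : z2 < N := Finset.mem_range.mp hz2m
  have hhz1 : h z1 ≤ T := by omega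
  have hhz2 : T - (q-1) ≤ h z2 := by omega
  have hup : ∀ w, w + 1 < N → h (w+1) ≤ h w + 2 := by
    intro w hwN
    have hg : G (w+1) = G w + 1 ∨ G (w+1) + 1 = G w :=
      gray_step q hq r' 0 w (by rw [← hkq]; exact hwN)
    have hw' : W (w+1) = W w + 1 ∨ W (w+1) + (q-1) = W w :=
      W_step q k hq hk0 x w (by rw [← hN]; exact hwN)
    have e3 : h (w+1) = G (w+1) + W (w+1) := rfl
    have e4 : h w = G w + W w := rfl
    omega
  have hdown : ∀ w, w + 1 < N → h w ≤ h (w+1) + q := by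
    intro w hwN
    have hg : G (w+1) = G w + 1 ∨ G (w+1) + 1 = G w :=
      gray_step q hq r' 0 w (by rw [← hkq]; exact hwN)
    have hw' : W (w+1) = W w + 1 ∨ W (w+1) + (q-1) = W w :=
      W_step q k hq hk0 x w (by rw [← hN]; exact hwN)
    have e3 : h (w+1) = G (w+1) + W (w+1) := rfl
    have e4 : h w = G w + W w := rfl
    omega
  have hfinal : ∃ z, z < N ∧ T - (q-1) ≤ h z ∧ h z ≤ T := by
    by_cases hc1 : T - (q-1) ≤ h z1
    · exact ⟨z1, hz1N, hc1, hhz1⟩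
    · push_neg at hc1
      by_cases hor : z1 ≤ z2
      · obtain ⟨z, hza, hzb, hz3, hz4⟩ := ivt_up h (T - (q-1)) T 2 z1 (by omega) (z2 - z1)
          (fun w hw1 hw2 => hup w (by omega))
          hc1 (by rw [show z1 + (z2 - z1) = z2 from by omega]; exact hhz2)
        exact ⟨z, by omega, hz3, hz4⟩
      · by_cases hc2 : h z2 ≤ T
        · exact ⟨z2, hz2N, hhz2, hc2⟩
        · push_neg at hc2
          obtain ⟨z, hza, hzb, hz3, hz4⟩ := ivt_down h (T - (q-1)) T q z2 (by omega) (z1 - z2)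
            (fun w hw1 hw2 => hdown w (by omega))
            hc2 (by rw [show z2 + (z1 - z2) = z1 from by omega]; exact hhz1)
          exact ⟨z, by omega, hz3, hz4⟩
  obtain ⟨z, hzN, hzA, hzB⟩ := hfinal
  refine ⟨z, by omega, T - h z, by omega, ?_⟩
  have hwt : wt (addq q x (bz q k z)) = W z := rfl
  have hgz : (grayEnc q 0 (digitsBE q r' z)).sum = G z := rfl
  rw [hwt, hgz]
  have hhz : h z = G z + W z := rfl
  omega
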